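/- Let n be a positive even integer, z ∈ I^FPF_n, and Θ = (1,2)(3,4)⋯(n−1,n) ∈ I^FPF_n. Then ℓ_fpf(z) = min{ℓ(w) : w ∈ S_n and w⁻¹ · Θ · w = z}. -/

import Mathlib

open MvPolynomial

noncomputable section

/-- The coefficient ring `ℤ[β]`. -/
abbrev Rb : Type := Polynomial ℤ

/-- The indeterminate `β`. -/
def bb : Rb := Polynomial.X

/-- The order-reversing permutation `n⋯321`, i.e. `i ↦ n+1-i` in 1-indexed notation. -/
def revPerm (n : ℕ) : Equiv.Perm (Fin n) :=
  ⟨Fin.rev, Fin.rev, fun i => Fin.rev_rev i, fun i => Fin.rev_rev i⟩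

/-- `z` is a fixed-point-free involution. -/
def IsFPF {n : ℕ} (z : Equiv.Perm (Fin n)) : Prop :=
  z * z = 1 ∧ ∀ i, z i ≠ i

/-- `x_i + x_j + β x_i x_j`. -/
def oplus {n : ℕ} (i j : Fin n) : MvPolynomial (Fin n) Rb :=
  X i + X j + C bb * (X i * X j)

/-- `IsDivDiffB i j f g` encodes `∂_i^{(β)} f = g` where `j = i+1`:
`∂_i^{(β)} f = ((1+βx_j) f - s_i((1+βx_j) f)) / (x_i - x_j)`, stated multiplicatively
(the quotient is exact, and `g` is uniquely determined since the ring is a domain). -/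
def IsDivDiffB {n : ℕ} (i j : Fin n) (f g : MvPolynomial (Fin n) Rb) : Prop :=
  (X i - X j) * g =
    (1 + C bb * X j) * f - rename ⇑(Equiv.swap i j) ((1 + C bb * X j) * f)

/-- `∏_{1 ≤ i < j ≤ n-i} (x_i + x_j + β x_i x_j)` (variables 0-indexed). -/
def spTop (n : ℕ) : MvPolynomial (Fin n) Rb :=
  ∏ p ∈ Finset.univ.filter
      (fun p : Fin n × Fin n => p.1 < p.2 ∧ (p.1 : ℕ) + (p.2 : ℕ) + 2 ≤ n),
    oplus p.1 p.2

/-- `x_1^{n-1} x_2^{n-2} ⋯ x_{n-1}^1` (variables 0-indexed). -/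
def grTop (n : ℕ) : MvPolynomial (Fin n) Rb :=
  ∏ a : Fin n, X a ^ (n - 1 - (a : ℕ))

/-- The defining property of the family of symplectic Grothendieck polynomials. -/
def IsSpFam (n : ℕ) (G : Equiv.Perm (Fin n) → MvPolynomial (Fin n) Rb) : Prop :=
  G (revPerm n) = spTop n ∧
    ∀ z : Equiv.Perm (Fin n), IsFPF z →
      ∀ i j : Fin n, (j : ℕ) = (i : ℕ) + 1 →
        z i ≠ j → z j ≠ i → z j < z i →
          IsDivDiffB i j (G z) (G (Equiv.swap i j * z * Equiv.swap i j))

/-- The defining property of the family of Grothendieck polynomials. -/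
def IsGrothFam (n : ℕ) (G : Equiv.Perm (Fin n) → MvPolynomial (Fin n) Rb) : Prop :=
  G (revPerm n) = grTop n ∧
    ∀ (w : Equiv.Perm (Fin n)) (i j : Fin n), (j : ℕ) = (i : ℕ) + 1 →
      w j < w i → IsDivDiffB i j (G w) (G (w * Equiv.swap i j))

/-- The length (number of inversions) of a permutation. -/
def invLen {n : ℕ} (w : Equiv.Perm (Fin n)) : ℕ :=
  (Finset.univ.filter (fun p : Fin n × Fin n => p.1 < p.2 ∧ w p.2 < w p.1)).card

/-- The fixed-point-free involution length `ℓ_fpf(z) = #{(i,j) : z(i) > z(j) < i < j}`. -/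
def fpfLen {n : ℕ} (z : Equiv.Perm (Fin n)) : ℕ :=
  (Finset.univ.filter
      (fun p : Fin n × Fin n => z p.2 < z p.1 ∧ z p.2 < p.1 ∧ p.1 < p.2)).card

/-- The underlying function of `Θ = (1,2)(3,4)⋯(n-1,n)`. -/
def thetaFun (n : ℕ) (hn : n % 2 = 0) (i : Fin n) : Fin n :=
  ⟨if (i : ℕ) % 2 = 0 then (i : ℕ) + 1 else (i : ℕ) - 1, by
    have hi := i.isLt
    split_ifs with h <;> omega⟩

/-- The fixed-point-free involution `Θ = (1,2)(3,4)⋯(n-1,n)`. -/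
def theta (n : ℕ) (hn : n % 2 = 0) : Equiv.Perm (Fin n) :=
  Function.Involutive.toPerm (thetaFun n hn) (by
    intro i
    have hi := i.isLt
    apply Fin.ext
    simp only [thetaFun]
    split_ifs <;> omega)

/-- One step of the partial Hecke action: `heckeStep a z = some (z · s_{a+1})` when defined,
with `a` a 0-indexed letter (so `a` corresponds to the simple transposition of `a+1, a+2`
in 1-indexed notation). -/
def heckeStep {n : ℕ} (a : ℕ) (z : Equiv.Perm (Fin n)) : Option (Equiv.Perm (Fin n)) :=
  if h : a + 1 < n then
    let i : Fin n := ⟨a, Nat.lt_of_succ_lt h⟩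
    let j : Fin n := ⟨a + 1, h⟩
    if z i < z j then some (Equiv.swap i j * z * Equiv.swap i j)
    else if z i = j ∧ z j = i then none
    else if z i ≠ j ∧ z j ≠ i ∧ z j < z i then some z
    else none
  else none

/-- Apply a word of (0-indexed) letters to `z` via the partial Hecke action. -/
def heckeApply {n : ℕ} (l : List ℕ) (z : Equiv.Perm (Fin n)) :
    Option (Equiv.Perm (Fin n)) :=
  l.foldl (fun o a => o.bind (heckeStep a)) (some z)

/-- The simple transposition corresponding to the 0-indexed letter `a`. -/
def swapAt (n : ℕ) (a : ℕ) : Equiv.Perm (Fin n) :=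
  if h : a + 1 < n then Equiv.swap ⟨a, Nat.lt_of_succ_lt h⟩ ⟨a + 1, h⟩ else 1

/-- The permutation `s_{i_1} s_{i_2} ⋯ s_{i_l}` of a word. -/
def wordToPerm (n : ℕ) (l : List ℕ) : Equiv.Perm (Fin n) := (l.map (swapAt n)).prod

/-- `l` is a reduced word for `w`. -/
def IsReducedWord (n : ℕ) (w : Equiv.Perm (Fin n)) (l : List ℕ) : Prop :=
  (∀ a ∈ l, a + 1 < n) ∧ wordToPerm n l = w ∧ l.length = invLen w

/-- The set of Hecke atoms `B_fpf(z)`. -/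
def Bfpf (n : ℕ) (hn : n % 2 = 0) (z : Equiv.Perm (Fin n)) :
    Finset (Equiv.Perm (Fin n)) :=
  @Finset.filter _
    (fun w => ∃ l : List ℕ, IsReducedWord n w l ∧ heckeApply l (theta n hn) = some z)
    (Classical.decPred _) Finset.univ

/-- `extPerm z w` is the permutation `z × w` acting on the first `m` letters by `z`
and the last `n` letters by `w`. -/
def extPerm {m n : ℕ} (z : Equiv.Perm (Fin m)) (w : Equiv.Perm (Fin n)) :
    Equiv.Perm (Fin (m + n)) :=
  finSumFinEquiv.symm.trans ((Equiv.sumCongr z w).trans finSumFinEquiv)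

/-- `rank(z_{[i][j]}) = #{k ∈ [j] : z(k) ≤ i}` (1-indexed sizes `i, j`). -/
def permRank {n : ℕ} (z : Equiv.Perm (Fin n)) (i j : ℕ) : ℕ :=
  (Finset.univ.filter (fun k : Fin n => (k : ℕ) < j ∧ ((z k : Fin n) : ℕ) < i)).card

/-- The rank of the upper-left `i × j` corner of `A` (1-indexed sizes `i, j ≤ n`). -/
def cornerRank {n : ℕ} (A : Matrix (Fin n) (Fin n) ℂ) (i j : ℕ) : ℕ :=
  Matrix.rank (Matrix.of fun (a : Fin (min i n)) (b : Fin (min j n)) =>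
    A ⟨(a : ℕ), lt_of_lt_of_le a.isLt (min_le_right i n)⟩
      ⟨(b : ℕ), lt_of_lt_of_le b.isLt (min_le_right j n)⟩)

/-- The orthogonal Rothe diagram `D^O(z) = {(i, z(j)) : z(i) > z(j) ≤ i < j}` (0-indexed). -/
def DO (n : ℕ) (z : Equiv.Perm (Fin n)) : Finset (Fin n × Fin n) :=
  Finset.image (fun p : Fin n × Fin n => (p.1, z p.2))
    (Finset.univ.filter (fun p : Fin n × Fin n => z p.2 < z p.1 ∧ z p.2 ≤ p.1 ∧ p.1 < p.2))

/-- The symplectic Rothe diagram `D^Sp(z) = {(i, z(j)) : z(i) > z(j) < i < j}` (0-indexed). -/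
def DSp (n : ℕ) (z : Equiv.Perm (Fin n)) : Finset (Fin n × Fin n) :=
  Finset.image (fun p : Fin n × Fin n => (p.1, z p.2))
    (Finset.univ.filter (fun p : Fin n × Fin n => z p.2 < z p.1 ∧ z p.2 < p.1 ∧ p.1 < p.2))

/-- The essential set `Ess(D) = {(i,j) ∈ D : (i,j+1) ∉ D and (i+1,j) ∉ D}`. -/
def Ess {n : ℕ} (D : Finset (Fin n × Fin n)) : Finset (Fin n × Fin n) :=
  D.filter (fun p =>
    (∀ q ∈ D, ¬(q.1 = p.1 ∧ (q.2 : ℕ) = (p.2 : ℕ) + 1)) ∧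
    (∀ q ∈ D, ¬((q.1 : ℕ) = (p.1 : ℕ) + 1 ∧ q.2 = p.2)))

/-- A permutation is vexillary if it avoids the pattern 2143. -/
def Vexillary {n : ℕ} (z : Equiv.Perm (Fin n)) : Prop :=
  ¬ ∃ i j k l : Fin n, i < j ∧ j < k ∧ k < l ∧ z j < z i ∧ z i < z l ∧ z l < z k

/-- The ideal of `ℤ[x_1,…,x_N]` generated by symmetric polynomials with zero constant term. -/
def ILambda (N : ℕ) : Ideal (MvPolynomial (Fin N) ℤ) :=
  Ideal.span {f : MvPolynomial (Fin N) ℤ |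
    (∀ σ : Equiv.Perm (Fin N), rename (⇑σ) f = f) ∧ coeff 0 f = 0}

/-- Substitute `x_j = 0` for all `j > n`, producing a polynomial in `x_1,…,x_n`. -/
def truncVars (n N : ℕ) (f : MvPolynomial (Fin N) Rb) : MvPolynomial (Fin n) Rb :=
  aeval (fun i : Fin N => if h : (i : ℕ) < n then X ⟨(i : ℕ), h⟩ else 0) f

/-- The order used to list the elements of a pipe-dream subset `S`:
rows weakly increasing, columns strictly decreasing within a row. -/
def rowOrder {n : ℕ} (p q : Fin n × Fin n) : Prop :=
  p.1 < q.1 ∨ (p.1 = q.1 ∧ q.2 < p.2)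

/-- `δ(S)` is a symplectic Hecke word for `z` (with Hecke words computed from `Θ`);
here `L` is the listing of `S` in the order `rowOrder`, and `(a,b) ∈ S` (0-indexed)
contributes the 0-indexed letter `a + b`, i.e. the 1-indexed letter `(b+1)+(a+1)-1`. -/
def DeltaHeckeWord (n : ℕ) (hn : n % 2 = 0) (z : Equiv.Perm (Fin n))
    (S : Finset (Fin n × Fin n)) : Prop :=
  ∃ L : List (Fin n × Fin n), L.toFinset = S ∧ L.Chain' rowOrder ∧
    heckeApply (L.map (fun p => (p.1 : ℕ) + (p.2 : ℕ))) (theta n hn) = some z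


section Aux15

open Finset Equiv

variable {n : ℕ}

lemma aux15_zz {z : Equiv.Perm (Fin n)} (hz : IsFPF z) (k : Fin n) : z (z k) = k := by
  have := congrArg (fun w : Equiv.Perm (Fin n) => w k) hz.1
  simpa using this

lemma aux15_invLen_inv (w : Equiv.Perm (Fin n)) : invLen w⁻¹ = invLen w := by
  unfold invLen
  apply Finset.card_bij' (fun p _ => (w⁻¹ p.2, w⁻¹ p.1)) (fun p _ => (w p.2, w p.1))
  · intro p hp
    simp only [Finset.mem_filter, mem_univ, true_and] at hp ⊢
    exact ⟨hp.2, by simpa using hp.1⟩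
  · intro p hp
    simp only [Finset.mem_filter, mem_univ, true_and] at hp ⊢
    exact ⟨hp.2, by simpa using hp.1⟩
  · intro p hp; simp
  · intro p hp; simp

lemma aux15_invLen_one : invLen (1 : Equiv.Perm (Fin n)) = 0 := by
  unfold invLen
  rw [Finset.card_eq_zero, Finset.filter_eq_empty_iff]
  rintro p -
  rintro ⟨h1, h2⟩
  simp only [Equiv.Perm.one_apply] at h2
  exact absurd h1 (not_lt.2 h2.le)

lemma aux15_swap_lt_swap {i j p1 p2 : Fin n} (hj : (j : ℕ) = (i : ℕ) + 1) (h12 : p1 < p2)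
    (hne : ¬(p1 = i ∧ p2 = j)) : Equiv.swap i j p1 < Equiv.swap i j p2 := by
  have hne' : ¬((p1 : ℕ) = (i : ℕ) ∧ (p2 : ℕ) = (j : ℕ)) := by
    intro h; exact hne ⟨Fin.ext h.1, Fin.ext h.2⟩
  have h12' : (p1 : ℕ) < (p2 : ℕ) := h12
  rw [Fin.lt_def]
  simp only [Equiv.swap_apply_def]
  split_ifs <;> omega

lemma aux15_invLen_mul_swap_of_lt {i j : Fin n} (hj : (j : ℕ) = (i : ℕ) + 1)
    (w : Equiv.Perm (Fin n)) (h : w i < w j) :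
    invLen (w * Equiv.swap i j) = invLen w + 1 := by
  have hij : i < j := by rw [Fin.lt_def]; omega
  have hsi : Equiv.swap i j i = j := Equiv.swap_apply_left i j
  have hsj : Equiv.swap i j j = i := Equiv.swap_apply_right i j
  have hss : ∀ x : Fin n, Equiv.swap i j (Equiv.swap i j x) = x :=
    fun x => Equiv.swap_apply_self i j x
  have memL : (i, j) ∈ Finset.univ.filter
      (fun p : Fin n × Fin n => p.1 < p.2 ∧ (w * Equiv.swap i j) p.2 < (w * Equiv.swap i j) p.1) := by
    rw [Finset.mem_filter]
    exact ⟨Finset.mem_univ _, hij, by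
      simp only [Equiv.Perm.mul_apply, hsi, hsj]; exact h⟩
  have memR : (i, j) ∉ Finset.univ.filter
      (fun p : Fin n × Fin n => p.1 < p.2 ∧ w p.2 < w p.1) := by
    rw [Finset.mem_filter]
    rintro ⟨-, -, h2⟩
    exact absurd h (not_lt.2 h2.le)
  have key : ((Finset.univ.filter
      (fun p : Fin n × Fin n => p.1 < p.2 ∧ (w * Equiv.swap i j) p.2 < (w * Equiv.swap i j) p.1)).erase
        (i, j)).card =
      ((Finset.univ.filter (fun p : Fin n × Fin n => p.1 < p.2 ∧ w p.2 < w p.1)).erase (i, j)).card := by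
    apply Finset.card_bij' (fun p _ => (Equiv.swap i j p.1, Equiv.swap i j p.2))
      (fun p _ => (Equiv.swap i j p.1, Equiv.swap i j p.2))
    · intro p hp
      rw [Finset.mem_erase, Finset.mem_filter] at hp
      obtain ⟨hne, -, h12, hv⟩ := hp
      simp only [Equiv.Perm.mul_apply, hss] at hv
      have hne2 : ¬(p.1 = i ∧ p.2 = j) := by
        rintro ⟨e1, e2⟩; exact hne (Prod.ext e1 e2)
      rw [Finset.mem_erase, Finset.mem_filter]
      refine ⟨?_, Finset.mem_univ _, aux15_swap_lt_swap hj h12 hne2, hv⟩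
      intro he
      have e1 : Equiv.swap i j p.1 = i := congrArg Prod.fst he
      have e2 : Equiv.swap i j p.2 = j := congrArg Prod.snd he
      have f1 : p.1 = j := by rw [← hss p.1, e1, hsi]
      have f2 : p.2 = i := by rw [← hss p.2, e2, hsj]
      rw [f1, f2] at h12
      exact absurd h12 (not_lt.2 hij.le)
    · intro p hp
      rw [Finset.mem_erase, Finset.mem_filter] at hp
      obtain ⟨hne, -, h12, hv⟩ := hp
      have hne2 : ¬(p.1 = i ∧ p.2 = j) := by
        rintro ⟨e1, e2⟩; exact hne (Prod.ext e1 e2)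
      rw [Finset.mem_erase, Finset.mem_filter]
      refine ⟨?_, Finset.mem_univ _, aux15_swap_lt_swap hj h12 hne2, by
        simp only [Equiv.Perm.mul_apply, hss]; exact hv⟩
      intro he
      have e1 : Equiv.swap i j p.1 = i := congrArg Prod.fst he
      have e2 : Equiv.swap i j p.2 = j := congrArg Prod.snd he
      have f1 : p.1 = j := by rw [← hss p.1, e1, hsi]
      have f2 : p.2 = i := by rw [← hss p.2, e2, hsj]
      rw [f1, f2] at h12
      exact absurd h12 (not_lt.2 hij.le)
    · intro p hp; simp [hss]
    · intro p hp; simp [hss]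
  show (Finset.univ.filter
      (fun p : Fin n × Fin n => p.1 < p.2 ∧ (w * Equiv.swap i j) p.2 < (w * Equiv.swap i j) p.1)).card
      = (Finset.univ.filter (fun p : Fin n × Fin n => p.1 < p.2 ∧ w p.2 < w p.1)).card + 1
  rw [← Finset.card_erase_add_one memL, key, Finset.erase_eq_of_notMem memR]

lemma aux15_invLen_mul_swap_of_gt {i j : Fin n} (hj : (j : ℕ) = (i : ℕ) + 1)
    (w : Equiv.Perm (Fin n)) (h : w j < w i) :
    invLen (w * Equiv.swap i j) + 1 = invLen w := by
  have h2 : (w * Equiv.swap i j) i < (w * Equiv.swap i j) j := by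
    simp only [Equiv.Perm.mul_apply, Equiv.swap_apply_left, Equiv.swap_apply_right]
    exact h
  have := aux15_invLen_mul_swap_of_lt hj (w * Equiv.swap i j) h2
  rw [mul_assoc, Equiv.swap_mul_self, mul_one] at this
  omega

lemma aux15_invLen_mul_le (u v : Equiv.Perm (Fin n)) : invLen (u * v) ≤ invLen u + invLen v := by
  classical
  set A1 := Finset.univ.filter
    (fun p : Fin n × Fin n => (p.1 < p.2 ∧ (u * v) p.2 < (u * v) p.1) ∧ v p.2 < v p.1) with hA1
  set A2 := Finset.univ.filter
    (fun p : Fin n × Fin n => (p.1 < p.2 ∧ (u * v) p.2 < (u * v) p.1) ∧ v p.1 < v p.2) with hA2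
  have hsub : Finset.univ.filter
      (fun p : Fin n × Fin n => p.1 < p.2 ∧ (u * v) p.2 < (u * v) p.1) ⊆ A1 ∪ A2 := by
    intro p hp
    rw [Finset.mem_filter] at hp
    rcases lt_or_gt_of_ne (fun e : v p.1 = v p.2 => (hp.2.1.ne (v.injective e))) with h | h
    · exact Finset.mem_union_right _ (by rw [Finset.mem_filter]; exact ⟨hp.1, hp.2, h⟩)
    · exact Finset.mem_union_left _ (by rw [Finset.mem_filter]; exact ⟨hp.1, hp.2, h⟩)
  have h1 : A1.card ≤ invLen v := by
    apply Finset.card_le_card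
    intro p hp
    rw [Finset.mem_filter] at hp ⊢
    exact ⟨hp.1, hp.2.1.1, hp.2.2⟩
  have h2 : A2.card ≤ invLen u := by
    apply Finset.card_le_card_of_injOn (fun p => (v p.1, v p.2))
    · intro p hp
      rw [Finset.mem_coe, Finset.mem_filter] at hp ⊢
      refine ⟨Finset.mem_univ _, hp.2.2, ?_⟩
      have := hp.2.1.2
      simpa only [Equiv.Perm.mul_apply] using this
    · intro p _ q _ he
      have e1 : v p.1 = v q.1 := congrArg Prod.fst he
      have e2 : v p.2 = v q.2 := congrArg Prod.snd he
      exact Prod.ext (v.injective e1) (v.injective e2)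
  calc invLen (u * v) ≤ (A1 ∪ A2).card := Finset.card_le_card hsub
    _ ≤ A1.card + A2.card := Finset.card_union_le _ _
    _ ≤ invLen v + invLen u := Nat.add_le_add h1 h2
    _ = invLen u + invLen v := Nat.add_comm _ _

lemma aux15_card_lt_fixed {z : Equiv.Perm (Fin n)} (hz : IsFPF z) :
    2 * (Finset.univ.filter (fun k : Fin n => k < z k)).card = n := by
  classical
  have hb : (Finset.univ.filter (fun k : Fin n => k < z k)).card
      = (Finset.univ.filter (fun k : Fin n => ¬ k < z k)).card := by
    apply Finset.card_bij' (fun k _ => z k) (fun k _ => z k)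
    · intro k hk
      rw [Finset.mem_filter] at hk ⊢
      refine ⟨Finset.mem_univ _, ?_⟩
      rw [aux15_zz hz]
      exact not_lt.2 hk.2.le
    · intro k hk
      rw [Finset.mem_filter] at hk ⊢
      refine ⟨Finset.mem_univ _, ?_⟩
      rw [aux15_zz hz]
      rcases lt_or_gt_of_ne (hz.2 k) with h | h
      · exact h
      · exact absurd h (by simpa using hk.2)
    · intro k _; exact aux15_zz hz k
    · intro k _; exact aux15_zz hz k
  have := Finset.card_filter_add_card_filter_not
    (s := (Finset.univ : Finset (Fin n))) (p := fun k : Fin n => k < z k)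
  rw [Finset.card_univ, Fintype.card_fin] at this
  omega

lemma aux15_invLen_eq_fpf {z : Equiv.Perm (Fin n)} (hz : IsFPF z) :
    invLen z = n / 2 + 2 * fpfLen z := by
  classical
  set Inv := Finset.univ.filter (fun p : Fin n × Fin n => p.1 < p.2 ∧ z p.2 < z p.1) with hInv
  set A := Finset.univ.filter
    (fun p : Fin n × Fin n => (p.1 < p.2 ∧ z p.2 < z p.1) ∧ z p.2 < p.1) with hA
  set B := Finset.univ.filter
    (fun p : Fin n × Fin n => (p.1 < p.2 ∧ z p.2 < z p.1) ∧ p.1 < z p.2) with hB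
  set F := Finset.univ.filter
    (fun p : Fin n × Fin n => (p.1 < p.2 ∧ z p.2 < z p.1) ∧ z p.2 = p.1) with hF
  have hsplit : Inv.card = A.card + B.card + F.card := by
    have hu : Inv = (A ∪ B) ∪ F := by
      ext p
      simp only [hInv, hA, hB, hF, Finset.mem_union, Finset.mem_filter, Finset.mem_univ, true_and]
      constructor
      · intro h
        rcases lt_trichotomy (z p.2) p.1 with hc | hc | hc
        · exact Or.inl (Or.inl ⟨h, hc⟩)
        · exact Or.inr ⟨h, hc⟩
        · exact Or.inl (Or.inr ⟨h, hc⟩)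
      · rintro ((⟨h, -⟩ | ⟨h, -⟩) | ⟨h, -⟩) <;> exact h
    have d1 : Disjoint A B := by
      rw [Finset.disjoint_left]
      intro p hp hq
      rw [Finset.mem_filter] at hp hq
      exact absurd hq.2.2 (not_lt.2 hp.2.2.le)
    have d2 : Disjoint (A ∪ B) F := by
      rw [Finset.disjoint_left]
      intro p hp hq
      rw [Finset.mem_filter] at hq
      rw [Finset.mem_union, Finset.mem_filter, Finset.mem_filter] at hp
      rcases hp with h | h
      · exact absurd hq.2.2 h.2.2.ne
      · exact absurd hq.2.2 h.2.2.ne'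
    rw [hu, Finset.card_union_of_disjoint d2, Finset.card_union_of_disjoint d1]
  have hAcard : A.card = fpfLen z := by
    unfold fpfLen
    congr 1
    ext p
    simp only [hA, Finset.mem_filter, Finset.mem_univ, true_and]
    tauto
  have hABcard : A.card = B.card := by
    apply Finset.card_bij' (fun p _ => (z p.2, z p.1)) (fun p _ => (z p.2, z p.1))
    · intro p hp
      rw [Finset.mem_filter] at hp ⊢
      obtain ⟨-, ⟨h12, hv⟩, hc⟩ := hp
      exact ⟨Finset.mem_univ _, ⟨hv, by rw [aux15_zz hz, aux15_zz hz]; exact h12⟩,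
        by rw [aux15_zz hz]; exact hc⟩
    · intro p hp
      rw [Finset.mem_filter] at hp ⊢
      obtain ⟨-, ⟨h12, hv⟩, hc⟩ := hp
      exact ⟨Finset.mem_univ _, ⟨hv, by rw [aux15_zz hz, aux15_zz hz]; exact h12⟩,
        by rw [aux15_zz hz]; exact hc⟩
    · intro p _; simp [aux15_zz hz]
    · intro p _; simp [aux15_zz hz]
  have hFcard : F.card = (Finset.univ.filter (fun k : Fin n => k < z k)).card := by
    apply Finset.card_bij' (fun p _ => p.1) (fun k _ => (k, z k))
    · intro p hp
      rw [Finset.mem_filter] at hp ⊢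
      obtain ⟨-, ⟨h12, hv⟩, hc⟩ := hp
      refine ⟨Finset.mem_univ _, ?_⟩
      have h2 : p.2 = z p.1 := by rw [← hc, aux15_zz hz]
      rw [← h2]
      exact h12
    · intro k hk
      rw [Finset.mem_filter] at hk ⊢
      obtain ⟨-, hk⟩ := hk
      exact ⟨Finset.mem_univ _, ⟨hk, by rw [aux15_zz hz]; exact hk⟩, by rw [aux15_zz hz]⟩
    · intro p hp
      rw [Finset.mem_filter] at hp
      obtain ⟨-, ⟨h12, hv⟩, hc⟩ := hp
      have : z p.1 = p.2 := by rw [← hc, aux15_zz hz]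
      exact Prod.ext rfl this
    · intro k _; rfl
  have hS := aux15_card_lt_fixed hz
  have hfin : invLen z = Inv.card := rfl
  omega

lemma aux15_theta_apply (hn : n % 2 = 0) (i : Fin n) :
    ((theta n hn i : Fin n) : ℕ) = if (i : ℕ) % 2 = 0 then (i : ℕ) + 1 else (i : ℕ) - 1 := rfl

lemma aux15_theta_fpf (hn : n % 2 = 0) : IsFPF (theta n hn) := by
  constructor
  · ext k
    simp only [Equiv.Perm.mul_apply, Equiv.Perm.one_apply]
    rw [aux15_theta_apply, aux15_theta_apply]
    have hk := k.isLt
    split_ifs <;> omega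
  · intro i he
    have := congrArg Fin.val he
    rw [aux15_theta_apply] at this
    have hi := i.isLt
    split_ifs at this <;> omega

lemma aux15_theta_fpfLen (hn : n % 2 = 0) : fpfLen (theta n hn) = 0 := by
  unfold fpfLen
  rw [Finset.card_eq_zero, Finset.filter_eq_empty_iff]
  rintro p - ⟨h1, h2, h3⟩
  have e2 := aux15_theta_apply hn p.2
  have l2 : ((theta n hn p.2 : Fin n) : ℕ) < ((p.1 : Fin n) : ℕ) := h2
  have l3 : ((p.1 : Fin n) : ℕ) < ((p.2 : Fin n) : ℕ) := h3
  have h2pos := (p.2 : Fin n).isLt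
  split_ifs at e2 <;> omega

lemma aux15_exists_descent {z : Equiv.Perm (Fin n)} (hz : IsFPF z) (hpos : 0 < fpfLen z) :
    ∃ i j : Fin n, (j : ℕ) = (i : ℕ) + 1 ∧ z j < z i ∧ z i ≠ j := by
  by_contra hcon
  push_neg at hcon
  obtain ⟨p, hp⟩ := Finset.card_pos.1 hpos
  rw [Finset.mem_filter] at hp
  obtain ⟨-, hv, hc, h12⟩ := hp
  set a := p.1 with ha
  set b := p.2 with hb
  have hcn : ((z b : Fin n) : ℕ) < (a : ℕ) := hc
  have habn : (a : ℕ) < (b : ℕ) := h12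
  have hvn : ((z b : Fin n) : ℕ) < ((z a : Fin n) : ℕ) := hv
  have hbn := b.isLt
  have hlt : ∀ d : ℕ, (b : ℕ) - d < n := fun d => by omega
  have hadj : ∀ k : ℕ, ∀ hk1 : k + 1 < n,
      z ⟨k, Nat.lt_of_succ_lt hk1⟩ < z ⟨k + 1, hk1⟩ ∨
      z ⟨k, Nat.lt_of_succ_lt hk1⟩ = ⟨k + 1, hk1⟩ := by
    intro k hk1
    rcases lt_trichotomy (z ⟨k, Nat.lt_of_succ_lt hk1⟩) (z ⟨k + 1, hk1⟩) with h | h | h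
    · exact Or.inl h
    · exact absurd (z.injective h) (by
        intro e
        have := congrArg Fin.val e
        simp only [] at this
        omega)
    · exact Or.inr (hcon ⟨k, Nat.lt_of_succ_lt hk1⟩ ⟨k + 1, hk1⟩ rfl h)
  have claim : ∀ d : ℕ, d ≤ (b : ℕ) - (a : ℕ) →
      ((z ⟨(b : ℕ) - d, hlt d⟩ : Fin n) : ℕ) ≤ ((z b : Fin n) : ℕ) := by
    intro d
    induction d with
    | zero =>
      intro _
      have e : (⟨(b : ℕ) - 0, hlt 0⟩ : Fin n) = b := Fin.ext (by simp)
      rw [e]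
    | succ d ih =>
      intro hd
      have ih' := ih (by omega)
      have hk1 : ((b : ℕ) - (d + 1)) + 1 < n := by omega
      have hkeq : (⟨((b : ℕ) - (d + 1)) + 1, hk1⟩ : Fin n) = ⟨(b : ℕ) - d, hlt d⟩ :=
        Fin.ext (show ((b : ℕ) - (d + 1)) + 1 = (b : ℕ) - d by omega)
      have hkeq2 : (⟨(b : ℕ) - (d + 1), Nat.lt_of_succ_lt hk1⟩ : Fin n)
          = ⟨(b : ℕ) - (d + 1), hlt (d + 1)⟩ := rfl
      rcases hadj ((b : ℕ) - (d + 1)) hk1 with h | h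
      · rw [hkeq, hkeq2] at h
        have h' : ((z ⟨(b : ℕ) - (d + 1), hlt (d + 1)⟩ : Fin n) : ℕ) <
            ((z ⟨(b : ℕ) - d, hlt d⟩ : Fin n) : ℕ) := h
        omega
      · exfalso
        have h2 : z ⟨((b : ℕ) - (d + 1)) + 1, hk1⟩ = ⟨(b : ℕ) - (d + 1), Nat.lt_of_succ_lt hk1⟩ := by
          rw [← h, aux15_zz hz]
        rw [hkeq] at h2
        have h3 : ((z ⟨(b : ℕ) - d, hlt d⟩ : Fin n) : ℕ) = (b : ℕ) - (d + 1) := by rw [h2]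
        omega
  have hfin := claim ((b : ℕ) - (a : ℕ)) le_rfl
  have haeq : (⟨(b : ℕ) - ((b : ℕ) - (a : ℕ)), hlt _⟩ : Fin n) = a :=
    Fin.ext (show (b : ℕ) - ((b : ℕ) - (a : ℕ)) = (a : ℕ) by omega)
  rw [haeq] at hfin
  omega

lemma aux15_eq_theta_of_fpfLen_zero {z : Equiv.Perm (Fin n)} (hz : IsFPF z)
    (hn : n % 2 = 0) (h0 : fpfLen z = 0) : z = theta n hn := by
  rw [fpfLen, Finset.card_eq_zero, Finset.filter_eq_empty_iff] at h0
  have claim : ∀ m : ℕ, ∀ hm : m < n,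
      ((z ⟨m, hm⟩ : Fin n) : ℕ) = if m % 2 = 0 then m + 1 else m - 1 := by
    intro m
    induction m using Nat.strong_induction_on with
    | _ m IH =>
      intro hm
      rcases Nat.even_or_odd m with hpar | hpar
      · have hpar' : m % 2 = 0 := Nat.even_iff.1 hpar
        rw [if_pos hpar']
        have low : ∀ k, k < m → ∀ hkn : k < n, ((z ⟨k, hkn⟩ : Fin n) : ℕ) < m := by
          intro k hk hkn
          have := IH k hk hkn
          split_ifs at this with h <;> omega
        have hmlt := (z ⟨m, hm⟩).isLt
        have hne_m : ((z ⟨m, hm⟩ : Fin n) : ℕ) ≠ m := fun e => hz.2 ⟨m, hm⟩ (Fin.ext e)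
        have hnotlow : ¬ (((z ⟨m, hm⟩ : Fin n) : ℕ) < m) := by
          intro hlow
          have hkn : ((z ⟨m, hm⟩ : Fin n) : ℕ) < n := hmlt
          have ez : z ⟨((z ⟨m, hm⟩ : Fin n) : ℕ), hkn⟩ = ⟨m, hm⟩ := by
            have e : (⟨((z ⟨m, hm⟩ : Fin n) : ℕ), hkn⟩ : Fin n) = z ⟨m, hm⟩ := Fin.ext rfl
            rw [e, aux15_zz hz]
          have := low _ hlow hkn
          rw [ez] at this
          exact lt_irrefl m this
        by_contra hneq
        have hbig : m + 1 < ((z ⟨m, hm⟩ : Fin n) : ℕ) := by omega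
        have hm1n : m + 1 < n := by omega
        have hnotlow1 : ¬ (((z ⟨m + 1, hm1n⟩ : Fin n) : ℕ) < m) := by
          intro hlow
          have hkn : ((z ⟨m + 1, hm1n⟩ : Fin n) : ℕ) < n := (z ⟨m + 1, hm1n⟩).isLt
          have ez : z ⟨((z ⟨m + 1, hm1n⟩ : Fin n) : ℕ), hkn⟩ = ⟨m + 1, hm1n⟩ := by
            have e : (⟨((z ⟨m + 1, hm1n⟩ : Fin n) : ℕ), hkn⟩ : Fin n) = z ⟨m + 1, hm1n⟩ :=
              Fin.ext rfl
            rw [e, aux15_zz hz]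
          have := low _ hlow hkn
          rw [ez] at this
          have hx : m + 1 < m := this
          omega
        have hne_m1 : ((z ⟨m + 1, hm1n⟩ : Fin n) : ℕ) ≠ m := by
          intro e
          have ez : z ⟨m + 1, hm1n⟩ = ⟨m, hm⟩ := Fin.ext e
          have := congrArg z ez
          rw [aux15_zz hz] at this
          have := congrArg Fin.val this
          simp only [] at this
          omega
        have hgt : m < ((z ⟨m + 1, hm1n⟩ : Fin n) : ℕ) := by omega
        have hc1 : z (z ⟨m, hm⟩) < z ⟨m + 1, hm1n⟩ := by
          rw [aux15_zz hz, Fin.lt_def]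
          exact hgt
        have hc2 : z (z ⟨m, hm⟩) < (⟨m + 1, hm1n⟩ : Fin n) := by
          rw [aux15_zz hz, Fin.lt_def]
          exact Nat.lt_succ_self m
        have hc3 : (⟨m + 1, hm1n⟩ : Fin n) < z ⟨m, hm⟩ := by
          rw [Fin.lt_def]
          exact hbig
        exact h0 (Finset.mem_univ ((⟨m + 1, hm1n⟩ : Fin n), z ⟨m, hm⟩)) ⟨hc1, hc2, hc3⟩
      · have hpar' : m % 2 = 1 := Nat.odd_iff.1 hpar
        rw [if_neg (by omega)]
        have hm1 : m - 1 < n := by omega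
        have e := IH (m - 1) (by omega) hm1
        rw [if_pos (by omega)] at e
        have e2 : z ⟨m - 1, hm1⟩ = ⟨m, hm⟩ := Fin.ext (by simp only []; omega)
        have e3 : z ⟨m, hm⟩ = ⟨m - 1, hm1⟩ := by rw [← e2, aux15_zz hz]
        rw [e3]
  apply Equiv.ext
  intro i
  apply Fin.ext
  rw [aux15_theta_apply hn i]
  have := claim i.val i.isLt
  rw [Fin.eta] at this
  exact this

lemma aux15_lower_bound (hev : n % 2 = 0) {z w : Equiv.Perm (Fin n)} (hz : IsFPF z)
    (hw : w⁻¹ * theta n hev * w = z) : fpfLen z ≤ invLen w := by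
  have h1 : invLen z ≤ invLen (w⁻¹ * theta n hev) + invLen w := by
    rw [← hw]
    exact aux15_invLen_mul_le _ _
  have h2 : invLen (w⁻¹ * theta n hev) ≤ invLen w⁻¹ + invLen (theta n hev) :=
    aux15_invLen_mul_le _ _
  have h3 : invLen w⁻¹ = invLen w := aux15_invLen_inv w
  have h4 : invLen (theta n hev) = n / 2 + 2 * fpfLen (theta n hev) :=
    aux15_invLen_eq_fpf (aux15_theta_fpf hev)
  have h5 : fpfLen (theta n hev) = 0 := aux15_theta_fpfLen hev
  have h6 : invLen z = n / 2 + 2 * fpfLen z := aux15_invLen_eq_fpf hz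
  omega

lemma aux15_exists_word (hev : n % 2 = 0) :
    ∀ N : ℕ, ∀ z : Equiv.Perm (Fin n), IsFPF z → fpfLen z = N →
      ∃ w : Equiv.Perm (Fin n), w⁻¹ * theta n hev * w = z ∧ invLen w ≤ fpfLen z := by
  intro N
  induction N using Nat.strong_induction_on with
  | _ N IH =>
    intro z hz hN
    rcases Nat.eq_zero_or_pos N with h0 | hposN
    · subst h0
      refine ⟨1, ?_, ?_⟩
      · rw [inv_one, one_mul, mul_one]
        exact (aux15_eq_theta_of_fpfLen_zero hz hev hN).symm
      · rw [aux15_invLen_one]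
        exact Nat.zero_le _
    · obtain ⟨i, j, hj, hd, hne⟩ := aux15_exists_descent hz (hN ▸ hposN)
      set s : Equiv.Perm (Fin n) := Equiv.swap i j with hs
      have hss : s * s = 1 := Equiv.swap_mul_self i j
      have hsinv : s⁻¹ = s := Equiv.swap_inv i j
      have hzinv : z⁻¹ = z := inv_eq_of_mul_eq_one_right hz.1
      have hzi_ne_i : z i ≠ i := hz.2 i
      have hzj_ne_j : z j ≠ j := hz.2 j
      have hzj_ne_i : z j ≠ i := by
        intro e
        apply hne
        rw [← e, aux15_zz hz]
      have hszi : s (z i) = z i := Equiv.swap_apply_of_ne_of_ne hzi_ne_i hne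
      have hszj : s (z j) = z j := Equiv.swap_apply_of_ne_of_ne hzj_ne_i hzj_ne_j
      set z' : Equiv.Perm (Fin n) := s * z * s with hz'def
      have k1 : ∀ x : Equiv.Perm (Fin n), s * (s * x) = x := fun x => by
        rw [← mul_assoc, hss, one_mul]
      have hz'fpf : IsFPF z' := by
        constructor
        · show s * z * s * (s * z * s) = 1
          simp only [mul_assoc]
          rw [k1, ← mul_assoc z z s, hz.1, one_mul, hss]
        · intro k e
          have e2 : z (s k) = s k := by
            have := congrArg s e
            have e3 : s (z' k) = z (s k) := by
              show s (s (z (s k))) = z (s k)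
              rw [Equiv.swap_apply_self]
            rw [e3] at this
            exact this
          exact hz.2 (s k) e2
      have step1 : invLen (z * s) + 1 = invLen z := aux15_invLen_mul_swap_of_gt hj z hd
      have einv : (z * s)⁻¹ = s * z := by rw [mul_inv_rev, hsinv, hzinv]
      have step2 : invLen ((z * s)⁻¹ * s) + 1 = invLen ((z * s)⁻¹) := by
        apply aux15_invLen_mul_swap_of_gt hj
        rw [einv]
        show s (z j) < s (z i)
        rw [hszi, hszj]
        exact hd
      have e2 : ((z * s)⁻¹ * s)⁻¹ = z' := by
        rw [mul_inv_rev, inv_inv, hsinv, hz'def, ← mul_assoc]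
      have step3 : invLen z' = invLen ((z * s)⁻¹ * s) := by
        rw [← e2, aux15_invLen_inv]
      have hinvz' : invLen z' + 2 = invLen z := by
        have := aux15_invLen_inv (z * s)
        omega
      have hfpf1 : fpfLen z' + 1 = fpfLen z := by
        have ha := aux15_invLen_eq_fpf hz
        have hb := aux15_invLen_eq_fpf hz'fpf
        omega
      obtain ⟨u, hu, hlen⟩ := IH (fpfLen z') (by omega) z' hz'fpf rfl
      refine ⟨u * s, ?_, ?_⟩
      · have hstep : (u * s)⁻¹ * theta n hev * (u * s) = s * (u⁻¹ * theta n hev * u) * s := by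
          rw [mul_inv_rev, hsinv]
          group
        rw [hstep, hu, hz'def]
        rw [show s * (s * z * s) * s = s * (s * (z * (s * s))) by
          simp only [mul_assoc], hss, mul_one, k1]
      · have hijne : i ≠ j := fun e => by
          have := congrArg Fin.val e
          omega
        have hcase : invLen (u * s) ≤ invLen u + 1 := by
          rcases lt_or_gt_of_ne (fun e : u i = u j => hijne (u.injective e)) with h | h
          · exact le_of_eq (by rw [hs]; exact aux15_invLen_mul_swap_of_lt hj u h)
          · have := aux15_invLen_mul_swap_of_gt hj u h
            rw [hs]
            omega
        omega

end Aux15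


theorem statement15 (n : ℕ) (hpos : 0 < n) (hev : n % 2 = 0)
    (z : Equiv.Perm (Fin n)) (hz : IsFPF z) :
    IsLeast {m : ℕ | ∃ w : Equiv.Perm (Fin n),
      w⁻¹ * theta n hev * w = z ∧ invLen w = m} (fpfLen z) := by
  constructor
  · obtain ⟨w, hw, hle⟩ := aux15_exists_word hev (fpfLen z) z hz rfl
    exact ⟨w, hw, le_antisymm hle (aux15_lower_bound hev hz hw)⟩
  · rintro m ⟨w, hw, rfl⟩
    exact aux15_lower_bound hev hz hw


end
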